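/- Let L ∈ (0,1), v_S ∈ ℝ, γ > 0, and consider the 4×4 matrix A with rows (v_S, 0, 0, B), (0, v_S, 0, E), (0, 0, v_S, D), (η, η, η, ((3L−2)/L)·v_S), where η = γ·L/(1−L) − v_S²/L² and B, E, D ≥ 0 with B + E + D = 1 − L. If v_S = 0, then the eigenvalues of A are 0 (with multiplicity 2) and ±√(γ·L), hence A is diagonalizable over ℝ and the associated first-order system is hyperbolic at states with zero velocity. -/

import Mathlib

open Polynomial

theorem stmt_18 (L vS γ B E D : ℝ)
    (hL : L ∈ Set.Ioo (0 : ℝ) 1) (hγ : 0 < γ)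
    (hB : 0 ≤ B) (hE : 0 ≤ E) (hD : 0 ≤ D)
    (hsum : B + E + D = 1 - L)
    (η : ℝ) (hη : η = γ * L / (1 - L) - vS ^ 2 / L ^ 2)
    (A : Matrix (Fin 4) (Fin 4) ℝ)
    (hA : A = !![vS, 0, 0, B;
                 0, vS, 0, E;
                 0, 0, vS, D;
                 η, η, η, ((3 * L - 2) / L) * vS])
    (hv : vS = 0) :
    A.charpoly.roots = {0, 0, Real.sqrt (γ * L), -Real.sqrt (γ * L)} ∧
    ∃ P Dg : Matrix (Fin 4) (Fin 4) ℝ, IsUnit P.det ∧ Dg.IsDiag ∧ A = P * Dg * P⁻¹ := by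
  obtain ⟨hL0, hL1⟩ := hL
  have h1L : (0:ℝ) < 1 - L := by linarith
  set μ := Real.sqrt (γ * L) with hμdef
  have hγL : 0 < γ * L := mul_pos hγ hL0
  have hμ2 : μ ^ 2 = γ * L := Real.sq_sqrt hγL.le
  have hμpos : 0 < μ := Real.sqrt_pos.mpr hγL
  have hηs : η * (B + E + D) = γ * L := by
    rw [hsum, hη, hv]; field_simp; ring
  have hA' : A = !![(0:ℝ), 0, 0, B; 0, 0, 0, E; 0, 0, 0, D; η, η, η, 0] := by
    rw [hA, hv]; norm_num
  -- characteristic polynomial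
  have hdet : A.charpoly = X^4 - C (η*(B+E+D)) * X^2 := by
    rw [Matrix.charpoly, hA']
    have hcm : (!![(0:ℝ), 0, 0, B; 0, 0, 0, E; 0, 0, 0, D; η, η, η, 0]).charmatrix
        = !![X, 0, 0, -C B; 0, X, 0, -C E; 0, 0, X, -C D; -C η, -C η, -C η, X] := by
      ext i j
      fin_cases i <;> fin_cases j <;>
        simp [Matrix.charmatrix_apply, Matrix.one_apply]
    rw [hcm]
    simp [Matrix.det_succ_row_zero, Fin.sum_univ_succ]
    simp [show ((2 : Fin 3).castSucc : Fin 4) = 2 from rfl,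
      show ((3:Fin 4).succAbove (2:Fin 3) : Fin 4) = 2 from rfl]
    ring
  have hch : A.charpoly = (X - C 0) * (X - C 0) * (X - C μ) * (X - C (-μ)) := by
    rw [hdet, hηs, ← hμ2]
    have : (C (μ^2) : ℝ[X]) = C μ * C μ := by rw [← C_mul]; ring_nf
    rw [this]
    simp only [map_neg, map_zero]
    ring
  constructor
  · rw [hch]
    have h1 : (X - C (0:ℝ)) ≠ 0 := X_sub_C_ne_zero 0
    have h2 : (X - C μ) ≠ 0 := X_sub_C_ne_zero μ
    have h3 : (X - C (-μ)) ≠ 0 := X_sub_C_ne_zero (-μ)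
    rw [Polynomial.roots_mul (mul_ne_zero (mul_ne_zero (mul_ne_zero h1 h1) h2) h3),
      Polynomial.roots_mul (mul_ne_zero (mul_ne_zero h1 h1) h2),
      Polynomial.roots_mul (mul_ne_zero h1 h1)]
    simp only [Polynomial.roots_X_sub_C, Multiset.insert_eq_cons]
    rfl
  · refine ⟨!![1,0,B,B; -1,1,E,E; 0,-1,D,D; 0,0,μ,-μ],
      Matrix.diagonal ![0,0,μ,-μ], ?_, Matrix.isDiag_diagonal _, ?_⟩
    · have hdP : (!![(1:ℝ),0,B,B; -1,1,E,E; 0,-1,D,D; 0,0,μ,-μ]).det = -2*μ*(B+E+D) := by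
        simp [Matrix.det_succ_row_zero, Fin.sum_univ_succ]
        simp [show ((2:Fin 4).succAbove (2:Fin 3) : Fin 4) = 3 from rfl,
          show ((3:Fin 4).succAbove (2:Fin 3) : Fin 4) = 2 from rfl,
          show ((2 : Fin 3).castSucc : Fin 4) = 2 from rfl]
        ring
      rw [hdP, isUnit_iff_ne_zero, hsum]
      nlinarith
    · have hdP : (!![(1:ℝ),0,B,B; -1,1,E,E; 0,-1,D,D; 0,0,μ,-μ]).det = -2*μ*(B+E+D) := by
        simp [Matrix.det_succ_row_zero, Fin.sum_univ_succ]
        simp [show ((2:Fin 4).succAbove (2:Fin 3) : Fin 4) = 3 from rfl,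
          show ((3:Fin 4).succAbove (2:Fin 3) : Fin 4) = 2 from rfl,
          show ((2 : Fin 3).castSucc : Fin 4) = 2 from rfl]
        ring
      have hu : IsUnit (!![(1:ℝ),0,B,B; -1,1,E,E; 0,-1,D,D; 0,0,μ,-μ]).det := by
        rw [hdP, isUnit_iff_ne_zero, hsum]; nlinarith
      have hDg : (Matrix.diagonal ![0,0,μ,-μ] : Matrix (Fin 4) (Fin 4) ℝ)
          = !![0,0,0,0; 0,0,0,0; 0,0,μ,0; 0,0,0,-μ] := by
        ext i j
        fin_cases i <;> fin_cases j <;> simp [Matrix.diagonal, Matrix.vecHead, Matrix.vecTail]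
      have hAP : A * !![(1:ℝ),0,B,B; -1,1,E,E; 0,-1,D,D; 0,0,μ,-μ]
          = !![(1:ℝ),0,B,B; -1,1,E,E; 0,-1,D,D; 0,0,μ,-μ] * Matrix.diagonal ![0,0,μ,-μ] := by
        rw [hA', hDg]
        have hηs' : η*(B+E+D) = μ*μ := by rw [hηs, ← hμ2]; ring
        ext i j
        fin_cases i <;> fin_cases j <;>
          simp [Matrix.mul_apply, Fin.sum_univ_four, Matrix.vecHead, Matrix.vecTail] <;>
          linarith [hηs']
      rw [← hAP, Matrix.mul_nonsing_inv_cancel_right _ _ hu]
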